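/- For the exponential distribution with rate 1 (F(x) = 1 - e^{-x}), the optimal-algorithm recurrence G(1) = 1, G(n) = ∫_0^{G(n-1)} e^{-u} du = 1 - e^{-G(n-1)}, together with β_n = 1/n, satisfies G(n) ≤ 2/n for all n ≥ 1. -/

import Mathlib

lemma aux_deriv_nonneg (x : ℝ) : 0 ≤ 1 - (1 - x) * Real.exp x := by
  rcases le_or_gt 1 x with h | h
  · nlinarith [Real.exp_pos x]
  · have h1 : 1 - x ≤ Real.exp (-x) := by
      have := Real.add_one_le_exp (-x); linarith
    have h2 : (1 - x) * Real.exp x ≤ Real.exp (-x) * Real.exp x := by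
      apply mul_le_mul_of_nonneg_right h1 (Real.exp_pos x).le
    rw [← Real.exp_add] at h2
    simp at h2
    linarith

lemma key_poly (x : ℝ) (hx : 0 ≤ x) : (2 - x) * Real.exp x ≤ 2 + x := by
  set f : ℝ → ℝ := fun x => 2 + x - (2 - x) * Real.exp x with hf
  have hderiv : ∀ y : ℝ, HasDerivAt f (1 - (1 - y) * Real.exp y) y := by
    intro y
    have h1 : HasDerivAt (fun y : ℝ => (2 - y) * Real.exp y)
        ((-1) * Real.exp y + (2 - y) * Real.exp y) y := by
      exact ((hasDerivAt_id y).const_sub 2 |>.mul (Real.hasDerivAt_exp y))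
    have h2 : HasDerivAt (fun y : ℝ => 2 + y) 1 y := by
      simpa using (hasDerivAt_id y).const_add 2
    have := h2.sub h1
    convert this using 1
    · rfl
    · rfl
    · rfl
    · ring
  have hmono : MonotoneOn f (Set.Ici (0:ℝ)) := by
    apply monotoneOn_of_deriv_nonneg (convex_Ici 0)
    · exact (Continuous.continuousOn (by continuity))
    · intro y _
      exact (hderiv y).differentiableAt.differentiableWithinAt
    · intro y _
      rw [(hderiv y).deriv]
      exact aux_deriv_nonneg y
  have h0 : f 0 ≤ f x := hmono (by simp) (by simpa using hx) hx
  simp [hf] at h0 ⊢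
  linarith

lemma key_ineq (x : ℝ) (hx : 0 ≤ x) : 1 - Real.exp (-x) ≤ 2 * x / (x + 2) := by
  have hpos : (0:ℝ) < x + 2 := by linarith
  rw [le_div_iff₀ hpos]
  have h1 : 2 - x ≤ (2 + x) * Real.exp (-x) := by
    have : (2 - x) * Real.exp x * Real.exp (-x) ≤ (2 + x) * Real.exp (-x) := by
      apply mul_le_mul_of_nonneg_right (key_poly x hx) (Real.exp_pos (-x)).le
    rwa [mul_assoc, ← Real.exp_add, add_neg_cancel, Real.exp_zero, mul_one] at this
  nlinarith [Real.exp_pos (-x)]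

theorem exponential_ratio_le_two
    (G : ℕ → ℝ) (hG1 : G 1 = 1)
    (hrec : ∀ n, 2 ≤ n → G n = 1 - Real.exp (-(G (n - 1)))) :
    ∀ n, 1 ≤ n → G n ≤ 2 / n := by
  have main : ∀ n, 1 ≤ n → 0 ≤ G n ∧ G n ≤ 2 / n := by
    intro n hn
    induction n, hn using Nat.le_induction with
    | base => rw [hG1]; norm_num
    | succ n hn ih =>
      obtain ⟨h0, h1⟩ := ih
      have hrw : G (n + 1) = 1 - Real.exp (-(G n)) := by
        have := hrec (n + 1) (by omega); simpa using this
      have hnR : (1:ℝ) ≤ (n:ℝ) := by exact_mod_cast hn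
      constructor
      · rw [hrw]
        have : Real.exp (-(G n)) ≤ 1 := Real.exp_le_one_iff.mpr (by linarith)
        linarith
      · rw [hrw]
        have step1 : 1 - Real.exp (-(G n)) ≤ 2 * G n / (G n + 2) := key_ineq _ h0
        have step2 : 2 * G n / (G n + 2) ≤ 2 * (2 / n) / (2 / n + 2) := by
          have hp1 : (0:ℝ) < G n + 2 := by linarith
          have hp2 : (0:ℝ) < 2 / n + 2 := by positivity
          rw [div_le_div_iff₀ hp1 hp2]
          have hnpos : (0:ℝ) < n := by linarith
          nlinarith
        have step3 : 2 * (2 / (n:ℝ)) / (2 / n + 2) = 2 / ((n:ℝ) + 1) := by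
          have hnpos : (0:ℝ) < n := by linarith
          field_simp
          ring
        push_cast
        linarith [step1, step2, step3.le]
  intro n hn
  exact (main n hn).2
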